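/- Let p > 1, let Γ : ℝⁿ × ℝⁿ × (0,∞) → [0,∞) be measurable satisfying (K1), let τ > 0, and for i = 1, 2 let u_i be a solution of the integral equation on ℝⁿ × (0,τ) with initial data u_{0,i} ∈ L^∞, u_{0,i} ≥ 0. Then for any σ ∈ (0,τ) there exists a constant C, depending only on p, ‖u₁‖_{L^∞(0,σ;L^∞)} and ‖u₂‖_{L^∞(0,σ;L^∞)}, such that sup_{0<t≤σ} ‖u₁(t) − u₂(t)‖_{L^∞} ≤ C ‖u_{0,1} − u_{0,2}‖_{L^∞}. In particular, bounded solutions of the integral equation with the same initial data coincide. -/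

import Mathlib

open MeasureTheory Metric Set

/-- Case (A) or case (B) of the paper: the weight is `w(x) = |x₁|^α` with `0 ≤ α < 1`,
or `w(x) = |x|^α` with `0 ≤ α < n`. -/
def CaseAB (n : ℕ) (hn : 0 < n) (α : ℝ) (w : EuclideanSpace ℝ (Fin n) → ℝ) : Prop :=
  (0 ≤ α ∧ α < 1 ∧ ∀ x, w x = |x ⟨0, hn⟩| ^ α) ∨
  (0 ≤ α ∧ (α : ℝ) < n ∧ ∀ x, w x = ‖x‖ ^ α)

/-- The measure `w(x) dx` on `ℝⁿ`. -/
noncomputable def wMeas (n : ℕ) (w : EuclideanSpace ℝ (Fin n) → ℝ) :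
    Measure (EuclideanSpace ℝ (Fin n)) :=
  volume.withDensity fun x => ENNReal.ofReal (w x)

/-- The weak Lorentz norm `‖f‖_{L^{r,∞}(μ)} = sup_{λ>0} λ μ({|f| > λ})^{1/r}` for
`1 < r < ∞`, with `L^{∞,∞}(μ) = L^∞`. -/
noncomputable def weakNorm {X : Type*} [MeasurableSpace X] (μ : Measure X) (f : X → ℝ)
    (r : ENNReal) : ENNReal :=
  if r = ⊤ then eLpNorm f ⊤ μ
  else ⨆ (lam : ℝ) (_ : 0 < lam), ENNReal.ofReal lam * μ {x | lam < |f x|} ^ (1 / r.toReal)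

/-- Property (K1): `∫ Γ(x,y,t) w(x) dx = ∫ Γ(x,y,t) w(y) dy = 1` for all `x, y, t > 0`. -/
def PropK1 {n : ℕ} (w : EuclideanSpace ℝ (Fin n) → ℝ)
    (Γ : EuclideanSpace ℝ (Fin n) → EuclideanSpace ℝ (Fin n) → ℝ → ℝ) : Prop :=
  ∀ (x y : EuclideanSpace ℝ (Fin n)) (t : ℝ), 0 < t →
    (∫⁻ z, ENNReal.ofReal (Γ z y t * w z)) = 1 ∧ (∫⁻ z, ENNReal.ofReal (Γ x z t * w z)) = 1

/-- Property (K2): `Γ(x,y,t) = ∫ Γ(x,ξ,t-s) Γ(ξ,y,s) w(ξ) dξ` for `t > s > 0`. -/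
def PropK2 {n : ℕ} (w : EuclideanSpace ℝ (Fin n) → ℝ)
    (Γ : EuclideanSpace ℝ (Fin n) → EuclideanSpace ℝ (Fin n) → ℝ → ℝ) : Prop :=
  ∀ (x y : EuclideanSpace ℝ (Fin n)) (s t : ℝ), 0 < s → s < t →
    ENNReal.ofReal (Γ x y t) = ∫⁻ ξ, ENNReal.ofReal (Γ x ξ (t - s) * Γ ξ y s * w ξ)

/-- Property (K3): two-sided Gaussian bounds in terms of `w(B(x,√t))`. -/
def PropK3 {n : ℕ} (w : EuclideanSpace ℝ (Fin n) → ℝ)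
    (Γ : EuclideanSpace ℝ (Fin n) → EuclideanSpace ℝ (Fin n) → ℝ → ℝ) : Prop :=
  ∃ cs Cs : ℝ, 0 < cs ∧ cs ≤ Cs ∧
    ∀ (x y : EuclideanSpace ℝ (Fin n)) (t : ℝ), 0 < t →
      cs / (Real.sqrt (∫ z in ball x (Real.sqrt t), w z) *
            Real.sqrt (∫ z in ball y (Real.sqrt t), w z)) *
          Real.exp (-‖x - y‖ ^ 2 / (cs * t)) ≤ Γ x y t ∧
      Γ x y t ≤ Cs / (Real.sqrt (∫ z in ball x (Real.sqrt t), w z) *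
            Real.sqrt (∫ z in ball y (Real.sqrt t), w z)) *
          Real.exp (-‖x - y‖ ^ 2 / (Cs * t))

/-- `u` is a (mild) solution of `∂ₜu - w⁻¹ div(w ∇u) = uᵖ`, `u(·,0) = u₀ ≥ 0`, on
`ℝⁿ × (0,T)`: `u` is nonnegative, measurable, essentially bounded on `ℝⁿ × (0,t)` for all
`t < T`, and for each `0 < t < T` and almost every `x`,
`u(x,t) = ∫ Γ(x,y,t) u₀(y) w(y) dy + ∫₀ᵗ ∫ Γ(x,y,t-s) u(y,s)ᵖ w(y) dy ds < ∞`;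
it is global-in-time if `T = ∞`. -/
def IsSolOn (n : ℕ) (w : EuclideanSpace ℝ (Fin n) → ℝ)
    (Γ : EuclideanSpace ℝ (Fin n) → EuclideanSpace ℝ (Fin n) → ℝ → ℝ) (p : ℝ)
    (u₀ : EuclideanSpace ℝ (Fin n) → ℝ) (u : EuclideanSpace ℝ (Fin n) → ℝ → ℝ)
    (T : ENNReal) : Prop :=
  Measurable (Function.uncurry u) ∧
  (∀ x t, 0 ≤ u x t) ∧
  (∃ M : ℝ, ∀ t : ℝ, 0 < t → ENNReal.ofReal t < T →
    ∀ᵐ x ∂(volume : Measure (EuclideanSpace ℝ (Fin n))), u x t ≤ M) ∧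
  ∀ t : ℝ, 0 < t → ENNReal.ofReal t < T →
    ∀ᵐ x ∂(volume : Measure (EuclideanSpace ℝ (Fin n))),
      ENNReal.ofReal (u x t) =
        (∫⁻ y, ENNReal.ofReal (Γ x y t * u₀ y * w y)) +
        ∫⁻ s in Ioo (0 : ℝ) t, ∫⁻ y, ENNReal.ofReal (Γ x y (t - s) * u y s ^ p * w y)


private lemma rpow_sub_rpow_le_mvt {p M a b : ℝ} (hp : 1 ≤ p) (hb : 0 ≤ b) (hba : b ≤ a)
    (haM : a ≤ M) : a ^ p - b ^ p ≤ p * M ^ (p - 1) * (a - b) := by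
  rcases eq_or_lt_of_le hba with rfl | hlt
  · simp
  obtain ⟨c, hc, hceq⟩ := exists_hasDerivAt_eq_slope (fun x : ℝ => x ^ p)
    (fun x => p * x ^ (p - 1)) hlt
    (fun x _ => (Real.hasDerivAt_rpow_const (Or.inr hp)).continuousAt.continuousWithinAt)
    (fun x _ => Real.hasDerivAt_rpow_const (Or.inr hp))
  have h1 : p * c ^ (p - 1) * (a - b) = a ^ p - b ^ p := by
    rw [hceq, div_mul_eq_mul_div, mul_div_assoc, div_self (sub_ne_zero.2 hlt.ne'), mul_one]
  have hc0 : 0 ≤ c := hb.trans hc.1.le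
  have hcM : c ≤ M := hc.2.le.trans haM
  have h2 : c ^ (p - 1) ≤ M ^ (p - 1) := Real.rpow_le_rpow hc0 hcM (by linarith)
  have h3 := mul_le_mul_of_nonneg_right
    (mul_le_mul_of_nonneg_left h2 (by linarith : (0:ℝ) ≤ p)) (sub_nonneg.2 hba)
  linarith

private lemma abs_rpow_sub_rpow_le_mvt {p M a b : ℝ} (hp : 1 ≤ p) (ha : 0 ≤ a) (hb : 0 ≤ b)
    (haM : a ≤ M) (hbM : b ≤ M) : |a ^ p - b ^ p| ≤ p * M ^ (p - 1) * |a - b| := by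
  rcases le_total b a with h | h
  · rw [abs_of_nonneg (sub_nonneg.2 (Real.rpow_le_rpow hb h (by linarith))),
      abs_of_nonneg (sub_nonneg.2 h)]
    exact rpow_sub_rpow_le_mvt hp hb h haM
  · rw [abs_of_nonpos (sub_nonpos.2 (Real.rpow_le_rpow ha h (by linarith))),
      abs_of_nonpos (sub_nonpos.2 h), neg_sub, neg_sub]
    exact rpow_sub_rpow_le_mvt hp ha h hbM

private def iterC (L σ : ℝ) : ℕ → ℝ
  | 0 => 0
  | k + 1 => 2 + 2 * L * σ * iterC L σ k

private lemma iterC_nonneg {L σ : ℝ} (hL : 0 ≤ L) (hσ : 0 ≤ σ) : ∀ k, 0 ≤ iterC L σ k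
  | 0 => le_refl 0
  | k + 1 => by
      have h1 := iterC_nonneg hL hσ k
      have h2 : 0 ≤ 2 * L * σ * iterC L σ k := by positivity
      simp only [iterC]; linarith

/-- Lemma 4.1: in case (A) or (B), with `p > 1` and measurable `Γ ≥ 0` satisfying (K1),
if `u₁, u₂` solve the integral equation on `ℝⁿ × (0,τ)` with bounded nonnegative initial
data `u₀₁, u₀₂`, then for any `σ ∈ (0,τ)` there is a constant `C > 0`, depending only on
`p`, `σ` and a bound `M` for `‖u₁‖_{L^∞(0,σ;L^∞)}` and `‖u₂‖_{L^∞(0,σ;L^∞)}`, such that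
`sup_{0<t≤σ} ‖u₁(t) - u₂(t)‖_∞ ≤ C ‖u₀₁ - u₀₂‖_∞`. In particular, bounded solutions with
the same initial data coincide. -/
theorem stmt_18 (n : ℕ) (hn : 0 < n) (α : ℝ) (w : EuclideanSpace ℝ (Fin n) → ℝ)
    (hw : CaseAB n hn α w) (p : ℝ) (hp : 1 < p) :
    (∀ τ σ M : ℝ, 0 < σ → σ < τ →
      ∃ C : ℝ, 0 < C ∧
        ∀ Γ : EuclideanSpace ℝ (Fin n) → EuclideanSpace ℝ (Fin n) → ℝ → ℝ,
          Measurable (fun q : (EuclideanSpace ℝ (Fin n)) × (EuclideanSpace ℝ (Fin n)) × ℝ =>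
            Γ q.1 q.2.1 q.2.2) →
          (∀ x y t, 0 ≤ Γ x y t) → PropK1 w Γ →
          ∀ u₀₁ u₀₂ : EuclideanSpace ℝ (Fin n) → ℝ,
            Measurable u₀₁ → Measurable u₀₂ → (∀ x, 0 ≤ u₀₁ x) → (∀ x, 0 ≤ u₀₂ x) →
            MemLp u₀₁ ⊤ (volume : Measure (EuclideanSpace ℝ (Fin n))) →
            MemLp u₀₂ ⊤ (volume : Measure (EuclideanSpace ℝ (Fin n))) →
            ∀ u₁ u₂ : EuclideanSpace ℝ (Fin n) → ℝ → ℝ,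
              IsSolOn n w Γ p u₀₁ u₁ (ENNReal.ofReal τ) →
              IsSolOn n w Γ p u₀₂ u₂ (ENNReal.ofReal τ) →
              (∀ t : ℝ, 0 < t → t ≤ σ →
                ∀ᵐ x ∂(volume : Measure (EuclideanSpace ℝ (Fin n))), u₁ x t ≤ M) →
              (∀ t : ℝ, 0 < t → t ≤ σ →
                ∀ᵐ x ∂(volume : Measure (EuclideanSpace ℝ (Fin n))), u₂ x t ≤ M) →
              ∀ t : ℝ, 0 < t → t ≤ σ →
                eLpNorm (fun x => u₁ x t - u₂ x t) ⊤
                    (volume : Measure (EuclideanSpace ℝ (Fin n))) ≤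
                  ENNReal.ofReal C *
                    eLpNorm (fun x => u₀₁ x - u₀₂ x) ⊤
                      (volume : Measure (EuclideanSpace ℝ (Fin n)))) ∧
    ∀ Γ : EuclideanSpace ℝ (Fin n) → EuclideanSpace ℝ (Fin n) → ℝ → ℝ,
      Measurable (fun q : (EuclideanSpace ℝ (Fin n)) × (EuclideanSpace ℝ (Fin n)) × ℝ =>
        Γ q.1 q.2.1 q.2.2) →
      (∀ x y t, 0 ≤ Γ x y t) → PropK1 w Γ →
      ∀ τ : ℝ, 0 < τ →
        ∀ u₀ : EuclideanSpace ℝ (Fin n) → ℝ, Measurable u₀ → (∀ x, 0 ≤ u₀ x) →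
          MemLp u₀ ⊤ (volume : Measure (EuclideanSpace ℝ (Fin n))) →
          ∀ u₁ u₂ : EuclideanSpace ℝ (Fin n) → ℝ → ℝ,
            IsSolOn n w Γ p u₀ u₁ (ENNReal.ofReal τ) →
            IsSolOn n w Γ p u₀ u₂ (ENNReal.ofReal τ) →
            ∀ t : ℝ, 0 < t → t < τ →
              (fun x => u₁ x t) =ᵐ[(volume : Measure (EuclideanSpace ℝ (Fin n)))]
                fun x => u₂ x t := by
  classical
  have hwm : Measurable w := by
    rcases hw with ⟨hα0, _, hwf⟩ | ⟨hα0, _, hwf⟩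
    · have h : w = fun x => |x ⟨0, hn⟩| ^ α := funext hwf
      rw [h]
      exact (Real.continuous_rpow_const hα0).measurable.comp ((measurable_pi_apply _).comp (WithLp.measurable_ofLp _ _)).abs
    · have h : w = fun x => ‖x‖ ^ α := funext hwf
      rw [h]
      exact (Real.continuous_rpow_const hα0).measurable.comp measurable_norm
  have hw0 : ∀ x, 0 ≤ w x := by
    rcases hw with ⟨hα0, _, hwf⟩ | ⟨hα0, _, hwf⟩ <;> intro x <;> rw [hwf]
    · exact Real.rpow_nonneg (abs_nonneg _) _
    · exact Real.rpow_nonneg (norm_nonneg _) _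
  have hppos : (0:ℝ) ≤ p := by linarith
  have hpow : Measurable fun r : ℝ => r ^ p := (Real.continuous_rpow_const hppos).measurable
  have part1 : ∀ τ σ M : ℝ, 0 < σ → σ < τ →
      ∃ C : ℝ, 0 < C ∧
        ∀ Γ : EuclideanSpace ℝ (Fin n) → EuclideanSpace ℝ (Fin n) → ℝ → ℝ,
          Measurable (fun q : (EuclideanSpace ℝ (Fin n)) × (EuclideanSpace ℝ (Fin n)) × ℝ =>
            Γ q.1 q.2.1 q.2.2) →
          (∀ x y t, 0 ≤ Γ x y t) → PropK1 w Γ →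
          ∀ u₀₁ u₀₂ : EuclideanSpace ℝ (Fin n) → ℝ,
            Measurable u₀₁ → Measurable u₀₂ → (∀ x, 0 ≤ u₀₁ x) → (∀ x, 0 ≤ u₀₂ x) →
            MemLp u₀₁ ⊤ (volume : Measure (EuclideanSpace ℝ (Fin n))) →
            MemLp u₀₂ ⊤ (volume : Measure (EuclideanSpace ℝ (Fin n))) →
            ∀ u₁ u₂ : EuclideanSpace ℝ (Fin n) → ℝ → ℝ,
              IsSolOn n w Γ p u₀₁ u₁ (ENNReal.ofReal τ) →
              IsSolOn n w Γ p u₀₂ u₂ (ENNReal.ofReal τ) →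
              (∀ t : ℝ, 0 < t → t ≤ σ →
                ∀ᵐ x ∂(volume : Measure (EuclideanSpace ℝ (Fin n))), u₁ x t ≤ M) →
              (∀ t : ℝ, 0 < t → t ≤ σ →
                ∀ᵐ x ∂(volume : Measure (EuclideanSpace ℝ (Fin n))), u₂ x t ≤ M) →
              ∀ t : ℝ, 0 < t → t ≤ σ →
                eLpNorm (fun x => u₁ x t - u₂ x t) ⊤
                    (volume : Measure (EuclideanSpace ℝ (Fin n))) ≤
                  ENNReal.ofReal C *
                    eLpNorm (fun x => u₀₁ x - u₀₂ x) ⊤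
                      (volume : Measure (EuclideanSpace ℝ (Fin n))) := by
    intro τ σ M hσ hστ
    set M₁ : ℝ := max M 1 with hM₁def
    have hM₁1 : (1:ℝ) ≤ M₁ := le_max_right _ _
    set L : ℝ := p * M₁ ^ (p - 1) with hLdef
    have hL0 : 0 < L := mul_pos (by linarith) (Real.rpow_pos_of_pos (by linarith) _)
    set t₀ : ℝ := 1 / (2 * L) with ht₀def
    have ht₀ : 0 < t₀ := by positivity
    have hLt₀ : L * t₀ = 1 / 2 := by rw [ht₀def]; field_simp
    set K : ℕ := ⌈σ / t₀⌉₊ with hKdef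
    have hKt₀ : σ ≤ (K:ℝ) * t₀ := by
      have h := Nat.le_ceil (σ / t₀)
      rw [div_le_iff₀ ht₀] at h
      exact h
    have hc0 : ∀ k, 0 ≤ iterC L σ k := iterC_nonneg hL0.le hσ.le
    refine ⟨max (iterC L σ K) 1, lt_of_lt_of_le one_pos (le_max_right _ _), ?_⟩
    intro Γ hΓm hΓ0 hK1 u₀₁ u₀₂ hm01 hm02 h001 h002 hLp1 hLp2 u₁ u₂ hs1 hs2 hb1 hb2
    obtain ⟨hum₁, hupos₁, -, heq₁⟩ := hs1
    obtain ⟨hum₂, hupos₂, -, heq₂⟩ := hs2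
    set d : ℝ → ENNReal := fun s => eLpNormEssSup (fun x => u₁ x s - u₂ x s) volume with hddef
    set Ev : ENNReal := eLpNormEssSup (fun x => u₀₁ x - u₀₂ x) volume with hEdef
    have hEfin : Ev ≠ ⊤ := by
      have h := (hLp1.sub hLp2).eLpNorm_ne_top
      rw [eLpNorm_exponent_top] at h
      exact h
    have hbd : ∀ s, 0 < s → s ≤ σ → d s ≤ ENNReal.ofReal M₁ := by
      intro s hs hsσ
      refine eLpNormEssSup_le_of_ae_bound (C := M₁) ?_
      filter_upwards [hb1 s hs hsσ, hb2 s hs hsσ] with x h1 h2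
      have hu1 := hupos₁ x s
      have hu2 := hupos₂ x s
      rw [Real.norm_eq_abs, abs_sub_le_iff]
      constructor <;> [skip; skip] <;> linarith [le_max_left M 1]
    have hΓy : ∀ (x : EuclideanSpace ℝ (Fin n)) (t : ℝ), Measurable fun y => Γ x y t :=
      fun x t => hΓm.comp (measurable_const.prodMk (measurable_id.prodMk measurable_const))
    have hΓsy : ∀ (x : EuclideanSpace ℝ (Fin n)) (t : ℝ),
        Measurable fun q : ℝ × EuclideanSpace ℝ (Fin n) => Γ x q.2 (t - q.1) :=
      fun x t => hΓm.comp (measurable_const.prodMk (measurable_snd.prodMk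
        (measurable_const.sub measurable_fst)))
    have hI1meas : ∀ (x : EuclideanSpace ℝ (Fin n)) (t : ℝ), Measurable fun s : ℝ =>
        ∫⁻ y, ENNReal.ofReal (Γ x y (t - s) * u₁ y s ^ p * w y) :=
      fun x t => Measurable.lintegral_prod_right'
        ((((hΓsy x t).mul (hpow.comp (hum₁.comp
          (measurable_snd.prodMk measurable_fst)))).mul
          (hwm.comp measurable_snd)).ennreal_ofReal)
    have hI2meas : ∀ (x : EuclideanSpace ℝ (Fin n)) (t : ℝ), Measurable fun s : ℝ =>
        ∫⁻ y, ENNReal.ofReal (Γ x y (t - s) * u₂ y s ^ p * w y) :=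
      fun x t => Measurable.lintegral_prod_right'
        ((((hΓsy x t).mul (hpow.comp (hum₂.comp
          (measurable_snd.prodMk measurable_fst)))).mul
          (hwm.comp measurable_snd)).ennreal_ofReal)
    have key : ∀ t, 0 < t → t ≤ σ → ∀ B : ℝ → ENNReal, Measurable B → (∀ s, B s ≠ ⊤) →
        (∀ s, 0 < s → s < t → d s ≤ B s) →
        d t ≤ Ev + ∫⁻ s in Ioo (0:ℝ) t, ENNReal.ofReal L * B s := by
      intro t ht htσ B hBm hBfin hB
      have htτ : ENNReal.ofReal t < ENNReal.ofReal τ :=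
        (ENNReal.ofReal_lt_ofReal_iff (by linarith)).2 (lt_of_le_of_lt htσ hστ)
      have hptwise : ∀ᵐ x ∂(volume : Measure (EuclideanSpace ℝ (Fin n))),
          ((‖u₁ x t - u₂ x t‖₊ : ENNReal)) ≤
            Ev + ∫⁻ s in Ioo (0:ℝ) t, ENNReal.ofReal L * B s := by
        filter_upwards [heq₁ t ht htτ, heq₂ t ht htτ] with x e₁ e₂
        set At : ENNReal := ∫⁻ y, ENNReal.ofReal (Γ x y t * |u₀₁ y - u₀₂ y| * w y) with hAt
        set Bt : ENNReal := ∫⁻ s in Ioo (0:ℝ) t,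
          ∫⁻ y, ENNReal.ofReal (Γ x y (t - s) * |u₁ y s ^ p - u₂ y s ^ p| * w y) with hBt
        have hpoint : ∀ (v₁ v₂ vd : EuclideanSpace ℝ (Fin n) → ℝ) (r : ℝ),
            (∀ y, v₁ y ≤ v₂ y + |vd y|) → ∀ y,
            ENNReal.ofReal (Γ x y r * v₁ y * w y) ≤
              ENNReal.ofReal (Γ x y r * v₂ y * w y) +
                ENNReal.ofReal (Γ x y r * |vd y| * w y) := by
          intro v₁ v₂ vd r hv y
          refine le_trans (ENNReal.ofReal_le_ofReal ?_) ENNReal.ofReal_add_le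
          have hcalc : Γ x y r * v₁ y * w y ≤ Γ x y r * (v₂ y + |vd y|) * w y :=
            mul_le_mul_of_nonneg_right
              (mul_le_mul_of_nonneg_left (hv y) (hΓ0 x y r)) (hw0 y)
          nlinarith [hcalc]
        have hA12 : (∫⁻ y, ENNReal.ofReal (Γ x y t * u₀₁ y * w y)) ≤
            (∫⁻ y, ENNReal.ofReal (Γ x y t * u₀₂ y * w y)) + At := by
          calc (∫⁻ y, ENNReal.ofReal (Γ x y t * u₀₁ y * w y))
              ≤ ∫⁻ y, (ENNReal.ofReal (Γ x y t * u₀₂ y * w y) +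
                  ENNReal.ofReal (Γ x y t * |u₀₁ y - u₀₂ y| * w y)) :=
                lintegral_mono (hpoint u₀₁ u₀₂ (fun y => u₀₁ y - u₀₂ y) t
                  (fun y => by linarith [le_abs_self (u₀₁ y - u₀₂ y)]))
            _ = _ := lintegral_add_left (((hΓy x t).mul hm02).mul hwm).ennreal_ofReal _
        have hA21 : (∫⁻ y, ENNReal.ofReal (Γ x y t * u₀₂ y * w y)) ≤
            (∫⁻ y, ENNReal.ofReal (Γ x y t * u₀₁ y * w y)) + At := by
          calc (∫⁻ y, ENNReal.ofReal (Γ x y t * u₀₂ y * w y))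
              ≤ ∫⁻ y, (ENNReal.ofReal (Γ x y t * u₀₁ y * w y) +
                  ENNReal.ofReal (Γ x y t * |u₀₁ y - u₀₂ y| * w y)) :=
                lintegral_mono (hpoint u₀₂ u₀₁ (fun y => u₀₁ y - u₀₂ y) t
                  (fun y => by linarith [neg_abs_le (u₀₁ y - u₀₂ y)]))
            _ = _ := lintegral_add_left (((hΓy x t).mul hm01).mul hwm).ennreal_ofReal _
        have hB12 : (∫⁻ s in Ioo (0:ℝ) t,
              ∫⁻ y, ENNReal.ofReal (Γ x y (t - s) * u₁ y s ^ p * w y)) ≤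
            (∫⁻ s in Ioo (0:ℝ) t,
              ∫⁻ y, ENNReal.ofReal (Γ x y (t - s) * u₂ y s ^ p * w y)) + Bt := by
          calc (∫⁻ s in Ioo (0:ℝ) t,
                ∫⁻ y, ENNReal.ofReal (Γ x y (t - s) * u₁ y s ^ p * w y))
              ≤ ∫⁻ s in Ioo (0:ℝ) t,
                  ((∫⁻ y, ENNReal.ofReal (Γ x y (t - s) * u₂ y s ^ p * w y)) +
                    ∫⁻ y, ENNReal.ofReal (Γ x y (t - s) * |u₁ y s ^ p - u₂ y s ^ p| * w y)) := by
                refine lintegral_mono fun s => ?_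
                calc (∫⁻ y, ENNReal.ofReal (Γ x y (t - s) * u₁ y s ^ p * w y))
                    ≤ ∫⁻ y, (ENNReal.ofReal (Γ x y (t - s) * u₂ y s ^ p * w y) +
                        ENNReal.ofReal (Γ x y (t - s) * |u₁ y s ^ p - u₂ y s ^ p| * w y)) :=
                      lintegral_mono (hpoint (fun y => u₁ y s ^ p) (fun y => u₂ y s ^ p)
                        (fun y => u₁ y s ^ p - u₂ y s ^ p) (t - s)
                        (fun y => by linarith [le_abs_self (u₁ y s ^ p - u₂ y s ^ p)]))
                  _ = _ := lintegral_add_left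
                      (((hΓy x (t - s)).mul (hpow.comp
                        (hum₂.comp (measurable_id.prodMk measurable_const)))).mul
                        hwm).ennreal_ofReal _
            _ = _ := lintegral_add_left (hI2meas x t) _
        have hB21 : (∫⁻ s in Ioo (0:ℝ) t,
              ∫⁻ y, ENNReal.ofReal (Γ x y (t - s) * u₂ y s ^ p * w y)) ≤
            (∫⁻ s in Ioo (0:ℝ) t,
              ∫⁻ y, ENNReal.ofReal (Γ x y (t - s) * u₁ y s ^ p * w y)) + Bt := by
          calc (∫⁻ s in Ioo (0:ℝ) t,
                ∫⁻ y, ENNReal.ofReal (Γ x y (t - s) * u₂ y s ^ p * w y))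
              ≤ ∫⁻ s in Ioo (0:ℝ) t,
                  ((∫⁻ y, ENNReal.ofReal (Γ x y (t - s) * u₁ y s ^ p * w y)) +
                    ∫⁻ y, ENNReal.ofReal (Γ x y (t - s) * |u₁ y s ^ p - u₂ y s ^ p| * w y)) := by
                refine lintegral_mono fun s => ?_
                calc (∫⁻ y, ENNReal.ofReal (Γ x y (t - s) * u₂ y s ^ p * w y))
                    ≤ ∫⁻ y, (ENNReal.ofReal (Γ x y (t - s) * u₁ y s ^ p * w y) +
                        ENNReal.ofReal (Γ x y (t - s) * |u₁ y s ^ p - u₂ y s ^ p| * w y)) :=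
                      lintegral_mono (hpoint (fun y => u₂ y s ^ p) (fun y => u₁ y s ^ p)
                        (fun y => u₁ y s ^ p - u₂ y s ^ p) (t - s)
                        (fun y => by linarith [neg_abs_le (u₁ y s ^ p - u₂ y s ^ p)]))
                  _ = _ := lintegral_add_left
                      (((hΓy x (t - s)).mul (hpow.comp
                        (hum₁.comp (measurable_id.prodMk measurable_const)))).mul
                        hwm).ennreal_ofReal _
            _ = _ := lintegral_add_left (hI1meas x t) _
        have hle₁ : ENNReal.ofReal (u₁ x t) ≤ ENNReal.ofReal (u₂ x t) + (At + Bt) := by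
          rw [e₁, e₂]
          calc _ ≤ ((∫⁻ y, ENNReal.ofReal (Γ x y t * u₀₂ y * w y)) + At) +
                ((∫⁻ s in Ioo (0:ℝ) t,
                  ∫⁻ y, ENNReal.ofReal (Γ x y (t - s) * u₂ y s ^ p * w y)) + Bt) :=
              add_le_add hA12 hB12
            _ = _ := by ring
        have hle₂ : ENNReal.ofReal (u₂ x t) ≤ ENNReal.ofReal (u₁ x t) + (At + Bt) := by
          rw [e₁, e₂]
          calc _ ≤ ((∫⁻ y, ENNReal.ofReal (Γ x y t * u₀₁ y * w y)) + At) +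
                ((∫⁻ s in Ioo (0:ℝ) t,
                  ∫⁻ y, ENNReal.ofReal (Γ x y (t - s) * u₁ y s ^ p * w y)) + Bt) :=
              add_le_add hA21 hB21
            _ = _ := by ring
        have habs : ENNReal.ofReal |u₁ x t - u₂ x t| ≤ At + Bt := by
          rcases le_total (u₁ x t) (u₂ x t) with h | h
          · rw [abs_of_nonpos (by linarith), neg_sub,
              ENNReal.ofReal_sub _ (hupos₁ x t)]
            exact tsub_le_iff_right.2 (by rwa [add_comm] at hle₂)
          · rw [abs_of_nonneg (by linarith), ENNReal.ofReal_sub _ (hupos₂ x t)]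
            exact tsub_le_iff_right.2 (by rwa [add_comm] at hle₁)
        have hAle : At ≤ Ev := by
          have h1 : ∀ᵐ y ∂(volume : Measure (EuclideanSpace ℝ (Fin n))),
              ENNReal.ofReal (Γ x y t * |u₀₁ y - u₀₂ y| * w y) ≤
                ENNReal.ofReal (Γ x y t * w y) * Ev := by
            filter_upwards [ae_le_eLpNormEssSup
              (f := fun y => u₀₁ y - u₀₂ y) (μ := (volume : Measure (EuclideanSpace ℝ (Fin n))))]
              with y hy
            calc ENNReal.ofReal (Γ x y t * |u₀₁ y - u₀₂ y| * w y)
                = ENNReal.ofReal (Γ x y t * w y) * ENNReal.ofReal |u₀₁ y - u₀₂ y| := by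
                  rw [mul_right_comm, ENNReal.ofReal_mul (mul_nonneg (hΓ0 _ _ _) (hw0 y))]
              _ ≤ ENNReal.ofReal (Γ x y t * w y) * Ev := by
                  refine mul_le_mul_right ?_ _
                  rw [← Real.enorm_eq_ofReal_abs]
                  exact hy
          calc At ≤ ∫⁻ y, ENNReal.ofReal (Γ x y t * w y) * Ev := lintegral_mono_ae h1
            _ = (∫⁻ y, ENNReal.ofReal (Γ x y t * w y)) * Ev := lintegral_mul_const' _ _ hEfin
            _ = Ev := by rw [(hK1 x x t ht).2, one_mul]
        have hBle : Bt ≤ ∫⁻ s in Ioo (0:ℝ) t, ENNReal.ofReal L * B s := by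
          refine setLIntegral_mono (measurable_const.mul hBm) ?_
          intro s hs
          obtain ⟨hs0, hst⟩ := hs
          have hsσ : s ≤ σ := le_of_lt (lt_of_lt_of_le hst htσ)
          have hts : 0 < t - s := by linarith
          have hae : ∀ᵐ y ∂(volume : Measure (EuclideanSpace ℝ (Fin n))),
              ENNReal.ofReal (Γ x y (t - s) * |u₁ y s ^ p - u₂ y s ^ p| * w y) ≤
                ENNReal.ofReal (Γ x y (t - s) * w y) * (ENNReal.ofReal L * B s) := by
            filter_upwards [hb1 s hs0 hsσ, hb2 s hs0 hsσ, ae_le_eLpNormEssSup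
              (f := fun y => u₁ y s - u₂ y s)
              (μ := (volume : Measure (EuclideanSpace ℝ (Fin n))))] with y h1 h2 hy
            have hmvt : |u₁ y s ^ p - u₂ y s ^ p| ≤ L * |u₁ y s - u₂ y s| :=
              abs_rpow_sub_rpow_le_mvt hp.le (hupos₁ y s) (hupos₂ y s)
                (h1.trans (le_max_left M 1)) (h2.trans (le_max_left M 1))
            calc ENNReal.ofReal (Γ x y (t - s) * |u₁ y s ^ p - u₂ y s ^ p| * w y)
                ≤ ENNReal.ofReal ((Γ x y (t - s) * w y) * (L * |u₁ y s - u₂ y s|)) := by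
                  refine ENNReal.ofReal_le_ofReal ?_
                  rw [mul_right_comm]
                  exact mul_le_mul_of_nonneg_left hmvt
                    (mul_nonneg (hΓ0 _ _ _) (hw0 y))
              _ = ENNReal.ofReal (Γ x y (t - s) * w y) *
                    (ENNReal.ofReal L * ENNReal.ofReal |u₁ y s - u₂ y s|) := by
                  rw [ENNReal.ofReal_mul (mul_nonneg (hΓ0 _ _ _) (hw0 y)),
                    ENNReal.ofReal_mul hL0.le]
              _ ≤ ENNReal.ofReal (Γ x y (t - s) * w y) * (ENNReal.ofReal L * B s) := by
                  refine mul_le_mul_right (mul_le_mul_right ?_ _) _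
                  rw [← Real.enorm_eq_ofReal_abs]
                  exact hy.trans (hB s hs0 hst)
          calc (∫⁻ y, ENNReal.ofReal (Γ x y (t - s) * |u₁ y s ^ p - u₂ y s ^ p| * w y))
              ≤ ∫⁻ y, ENNReal.ofReal (Γ x y (t - s) * w y) * (ENNReal.ofReal L * B s) :=
                lintegral_mono_ae hae
            _ = (∫⁻ y, ENNReal.ofReal (Γ x y (t - s) * w y)) * (ENNReal.ofReal L * B s) :=
                lintegral_mul_const' _ _
                  (ENNReal.mul_ne_top ENNReal.ofReal_ne_top (hBfin s))
            _ = ENNReal.ofReal L * B s := by rw [(hK1 x x (t - s) hts).2, one_mul]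
        rw [← enorm_eq_nnnorm, Real.enorm_eq_ofReal_abs]
        exact habs.trans (add_le_add hAle hBle)
      exact essSup_le_of_ae_le _ hptwise
    have main : ∀ k : ℕ, ∀ t, 0 < t → t ≤ σ → t ≤ (k:ℝ) * t₀ →
        d t ≤ ENNReal.ofReal (iterC L σ k) * Ev := by
      intro k
      induction k with
      | zero =>
        intro t ht _ hk
        simp only [Nat.cast_zero, zero_mul] at hk
        linarith
      | succ k ih =>
        intro t ht htσ htk
        set S : ENNReal := ⨆ (r : ℝ) (_ : 0 < r ∧ r ≤ σ ∧ r ≤ ((k:ℝ) + 1) * t₀), d r with hSdef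
        have hSfin : S ≠ ⊤ := by
          have hSM : S ≤ ENNReal.ofReal M₁ := iSup₂_le fun r hr => hbd r hr.1 hr.2.1
          exact ne_top_of_le_ne_top ENNReal.ofReal_ne_top hSM
        have hSle : ∀ r, 0 < r → r ≤ σ → r ≤ ((k:ℝ) + 1) * t₀ → d r ≤ S := by
          intro r h1 h2 h3
          exact le_iSup₂_of_le r ⟨h1, h2, h3⟩ le_rfl
        have hwin : ∀ t', 0 < t' → t' ≤ σ → t' ≤ ((k:ℝ) + 1) * t₀ →
            d t' ≤ ENNReal.ofReal (1 + L * σ * iterC L σ k) * Ev +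
              ENNReal.ofReal (1/2) * S := by
          intro t' ht' ht'σ ht'k
          set B' : ℝ → ENNReal := fun s =>
            if s ≤ (k:ℝ) * t₀ then ENNReal.ofReal (iterC L σ k) * Ev else S with hB'def
          have hB'm : Measurable B' := Measurable.ite measurableSet_Iic
            measurable_const measurable_const
          have hB'fin : ∀ s, B' s ≠ ⊤ := by
            intro s
            rw [hB'def]
            by_cases h : s ≤ (k:ℝ) * t₀
            · simp only [if_pos h]
              exact ENNReal.mul_ne_top ENNReal.ofReal_ne_top hEfin
            · simp only [if_neg h]
              exact hSfin
          have hB'le : ∀ s, 0 < s → s < t' → d s ≤ B' s := by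
            intro s h1 h2
            rw [hB'def]
            by_cases h : s ≤ (k:ℝ) * t₀
            · simp only [if_pos h]
              exact ih s h1 (le_of_lt (lt_of_lt_of_le h2 ht'σ)) h
            · simp only [if_neg h]
              exact hSle s h1 (le_of_lt (lt_of_lt_of_le h2 ht'σ)) (h2.le.trans ht'k)
          have hkey := key t' ht' ht'σ B' hB'm hB'fin hB'le
          have hint : (∫⁻ s in Ioo (0:ℝ) t', ENNReal.ofReal L * B' s) ≤
              ENNReal.ofReal (L * σ * iterC L σ k) * Ev + ENNReal.ofReal (1/2) * S := by
            have hstep : ∀ s, ENNReal.ofReal L * B' s ≤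
                ENNReal.ofReal L * (ENNReal.ofReal (iterC L σ k) * Ev) +
                  (Ioi ((k:ℝ) * t₀)).indicator
                    (fun _ => ENNReal.ofReal L * S) s := by
              intro s
              rw [hB'def]
              by_cases h : s ≤ (k:ℝ) * t₀
              · simp only [if_pos h]
                exact le_self_add
              · simp only [if_neg h]
                rw [Set.indicator_of_mem (mem_Ioi.2 (not_le.1 h))]
                exact self_le_add_left _ _
            calc (∫⁻ s in Ioo (0:ℝ) t', ENNReal.ofReal L * B' s)
                ≤ ∫⁻ s in Ioo (0:ℝ) t',
                    (ENNReal.ofReal L * (ENNReal.ofReal (iterC L σ k) * Ev) +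
                      (Ioi ((k:ℝ) * t₀)).indicator
                        (fun _ => ENNReal.ofReal L * S) s) := lintegral_mono hstep
              _ = ENNReal.ofReal L * (ENNReal.ofReal (iterC L σ k) * Ev) *
                    volume (Ioo (0:ℝ) t') +
                  ENNReal.ofReal L * S *
                    (volume.restrict (Ioo (0:ℝ) t')) (Ioi ((k:ℝ) * t₀)) := by
                  rw [lintegral_add_left measurable_const, setLIntegral_const,
                    lintegral_indicator_const measurableSet_Ioi]
              _ ≤ ENNReal.ofReal L * (ENNReal.ofReal (iterC L σ k) * Ev) *
                    ENNReal.ofReal σ +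
                  ENNReal.ofReal L * S * ENNReal.ofReal t₀ := by
                  refine add_le_add (mul_le_mul_right ?_ _) (mul_le_mul_right ?_ _)
                  · rw [Real.volume_Ioo]
                    exact ENNReal.ofReal_le_ofReal (by linarith)
                  · rw [Measure.restrict_apply measurableSet_Ioi]
                    refine le_trans (measure_mono (fun r hr =>
                      (mem_Ioo.2 ⟨hr.1, hr.2.2⟩ : r ∈ Ioo ((k:ℝ) * t₀) t'))) ?_
                    rw [Real.volume_Ioo]
                    exact ENNReal.ofReal_le_ofReal (by linarith)
              _ = ENNReal.ofReal (L * σ * iterC L σ k) * Ev +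
                  ENNReal.ofReal (1/2) * S := by
                  have e1 : ENNReal.ofReal L * ENNReal.ofReal (iterC L σ k) *
                      ENNReal.ofReal σ = ENNReal.ofReal (L * σ * iterC L σ k) := by
                    rw [← ENNReal.ofReal_mul hL0.le,
                      ← ENNReal.ofReal_mul (mul_nonneg hL0.le (hc0 k))]
                    congr 1; ring
                  have e2 : ENNReal.ofReal L * ENNReal.ofReal t₀ =
                      ENNReal.ofReal (1/2) := by
                    rw [← ENNReal.ofReal_mul hL0.le, hLt₀]
                  rw [← e1, ← e2]
                  ring
          calc d t' ≤ Ev + ∫⁻ s in Ioo (0:ℝ) t', ENNReal.ofReal L * B' s := hkey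
            _ ≤ Ev + (ENNReal.ofReal (L * σ * iterC L σ k) * Ev +
                ENNReal.ofReal (1/2) * S) := add_le_add_right hint _
            _ = ENNReal.ofReal (1 + L * σ * iterC L σ k) * Ev +
                ENNReal.ofReal (1/2) * S := by
                rw [ENNReal.ofReal_add one_pos.le (mul_nonneg (mul_nonneg hL0.le hσ.le) (hc0 k)), ENNReal.ofReal_one,
                  add_mul, one_mul, add_assoc]
        have hSbound : S ≤ ENNReal.ofReal (1 + L * σ * iterC L σ k) * Ev +
            ENNReal.ofReal (1/2) * S :=
          iSup₂_le fun r hr => hwin r hr.1 hr.2.1 hr.2.2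
        have hfin1 : ENNReal.ofReal (1 + L * σ * iterC L σ k) * Ev ≠ ⊤ :=
          ENNReal.mul_ne_top ENNReal.ofReal_ne_top hEfin
        have hfin2 : ENNReal.ofReal (1/2) * S ≠ ⊤ :=
          ENNReal.mul_ne_top ENNReal.ofReal_ne_top hSfin
        have htoR : S.toReal ≤ (1 + L * σ * iterC L σ k) * Ev.toReal +
            (1/2) * S.toReal := by
          have h := ENNReal.toReal_mono (ENNReal.add_ne_top.2 ⟨hfin1, hfin2⟩) hSbound
          rw [ENNReal.toReal_add hfin1 hfin2, ENNReal.toReal_mul, ENNReal.toReal_mul,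
            ENNReal.toReal_ofReal
              (by linarith [mul_nonneg (mul_nonneg hL0.le hσ.le) (hc0 k)]),
            ENNReal.toReal_ofReal (by norm_num : (0:ℝ) ≤ 1/2)] at h
          exact h
        have hfinal : S.toReal ≤ iterC L σ (k + 1) * Ev.toReal := by
          have hck : iterC L σ (k + 1) = 2 + 2 * L * σ * iterC L σ k := rfl
          rw [hck]
          nlinarith [ENNReal.toReal_nonneg (a := Ev)]
        calc d t ≤ S := hSle t ht htσ (by push_cast at htk ⊢; linarith)
          _ = ENNReal.ofReal S.toReal := (ENNReal.ofReal_toReal hSfin).symm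
          _ ≤ ENNReal.ofReal (iterC L σ (k + 1) * Ev.toReal) :=
              ENNReal.ofReal_le_ofReal hfinal
          _ = ENNReal.ofReal (iterC L σ (k + 1)) * ENNReal.ofReal Ev.toReal :=
              ENNReal.ofReal_mul (hc0 _)
          _ = ENNReal.ofReal (iterC L σ (k + 1)) * Ev := by
              rw [ENNReal.ofReal_toReal hEfin]
    intro t ht htσ
    rw [eLpNorm_exponent_top, eLpNorm_exponent_top]
    calc eLpNormEssSup (fun x => u₁ x t - u₂ x t) volume
        ≤ ENNReal.ofReal (iterC L σ K) * Ev := main K t ht htσ (htσ.trans hKt₀)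
      _ ≤ ENNReal.ofReal (max (iterC L σ K) 1) *
          eLpNormEssSup (fun x => u₀₁ x - u₀₂ x) volume :=
        mul_le_mul' (ENNReal.ofReal_le_ofReal (le_max_left _ _)) le_rfl
  refine ⟨part1, ?_⟩
  intro Γ hΓm hΓ0 hK1 τ hτ u₀ hm0 h00 hLp u₁ u₂ hs1 hs2 t ht htτ
  obtain ⟨M₁, hM₁⟩ := hs1.2.2.1
  obtain ⟨M₂, hM₂⟩ := hs2.2.2.1
  have hσ0 : 0 < (t + τ) / 2 := by linarith
  have hστ : (t + τ) / 2 < τ := by linarith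
  have htσ : t ≤ (t + τ) / 2 := by linarith
  obtain ⟨C, hC, hmain⟩ := part1 τ ((t + τ) / 2) (max M₁ M₂) hσ0 hστ
  have hbound : ∀ (v : EuclideanSpace ℝ (Fin n) → ℝ → ℝ) (Mv : ℝ),
      (∀ t' : ℝ, 0 < t' → ENNReal.ofReal t' < ENNReal.ofReal τ →
        ∀ᵐ x ∂(volume : Measure (EuclideanSpace ℝ (Fin n))), v x t' ≤ Mv) →
      Mv ≤ max M₁ M₂ →
      ∀ t' : ℝ, 0 < t' → t' ≤ (t + τ) / 2 →
        ∀ᵐ x ∂(volume : Measure (EuclideanSpace ℝ (Fin n))), v x t' ≤ max M₁ M₂ := by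
    intro v Mv hv hMv t' h1 h2
    have h3 : ENNReal.ofReal t' < ENNReal.ofReal τ :=
      (ENNReal.ofReal_lt_ofReal_iff hτ).2 (lt_of_le_of_lt h2 hστ)
    filter_upwards [hv t' h1 h3] with x hx
    exact hx.trans hMv
  have hres := hmain Γ hΓm hΓ0 hK1 u₀ u₀ hm0 hm0 h00 h00 hLp hLp u₁ u₂ hs1 hs2
    (hbound u₁ M₁ hM₁ (le_max_left _ _)) (hbound u₂ M₂ hM₂ (le_max_right _ _)) t ht htσ
  have hzero : eLpNorm (fun x => u₀ x - u₀ x) ⊤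
      (volume : Measure (EuclideanSpace ℝ (Fin n))) = 0 := by
    simp only [sub_self]
    exact eLpNorm_zero'
  rw [hzero, mul_zero, le_zero_iff] at hres
  have hmeas : AEStronglyMeasurable (fun x => u₁ x t - u₂ x t)
      (volume : Measure (EuclideanSpace ℝ (Fin n))) := by
    have h1 : Measurable fun x : EuclideanSpace ℝ (Fin n) => u₁ x t :=
      hs1.1.comp (measurable_id.prodMk measurable_const)
    have h2 : Measurable fun x : EuclideanSpace ℝ (Fin n) => u₂ x t :=
      hs2.1.comp (measurable_id.prodMk measurable_const)
    exact (h1.sub h2).aestronglyMeasurable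
  have heq0 := (eLpNorm_eq_zero_iff hmeas (by simp)).1 hres
  filter_upwards [heq0] with x hx
  exact sub_eq_zero.1 hx
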